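/- arXiv:math/0201256 — 3 statements merged into one kernel-verified Lean document; each statement's English description precedes it below -/
import Mathlib

section
/- Let D be a triangulated category, F = (F^i) and F' = (F'^i) cohomological functors from D to an abelian category, and φ: F → F' a natural transformation. Let S be a set of objects of D. Assume (i) there exists d ∈ ℤ such that F^i(X) = 0 = F'^i(X) for all i < d and all X ∈ S; (ii) for every X ∈ S there exists an exact (distinguished) triangle X → X̃ → Y with Y ∈ S such that φ: F^i(X̃) → F'^i(X̃) is an isomorphism for all i. Then φ: F^i(X) → F'^i(X) is an isomorphism for all i and all X ∈ S. -/
open CategoryTheory Category Limits Pretriangulated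

attribute [local instance] Functor.ShiftSequence.tautological

set_option maxHeartbeats 1000000 in
/-- an effaceability criterion for a natural transformation of
cohomological (homological) functors to be an isomorphism on a set `S` of objects.
Here `F.obj (X⟦i⟧)` plays the role of `F^i(X)`. -/
theorem stmt0 {D : Type*} [Category D] [Preadditive D] [HasZeroObject D]
    [HasShift D ℤ] [∀ n : ℤ, (shiftFunctor D n).Additive] [Pretriangulated D]
    {A : Type*} [Category A] [Abelian A]
    (F F' : D ⥤ A) [F.IsHomological] [F'.IsHomological]
    (φ : F ⟶ F') (S : Set D)
    (h1 : ∃ d : ℤ, ∀ i : ℤ, i < d → ∀ X ∈ S,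
      IsZero (F.obj (X⟦i⟧)) ∧ IsZero (F'.obj (X⟦i⟧)))
    (h2 : ∀ X ∈ S, ∃ (X' Y : D) (f : X ⟶ X') (g : X' ⟶ Y) (h : Y ⟶ X⟦(1 : ℤ)⟧),
      (Triangle.mk f g h ∈ distTriang D) ∧ Y ∈ S ∧ ∀ i : ℤ, IsIso (φ.app (X'⟦i⟧))) :
    ∀ X ∈ S, ∀ i : ℤ, IsIso (φ.app (X⟦i⟧)) := by
  obtain ⟨d, hd⟩ := h1
  -- naturality of φ with respect to the connecting maps
  have hδ : ∀ (T : Triangle D) (n₀ n₁ : ℤ) (h : n₀ + 1 = n₁),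
      F.homologySequenceδ T n₀ n₁ h ≫ φ.app (T.obj₁⟦n₁⟧) =
        φ.app (T.obj₃⟦n₀⟧) ≫ F'.homologySequenceδ T n₀ n₁ h := by
    intro T n₀ n₁ h
    dsimp [Functor.homologySequenceδ, Functor.shiftMap, Functor.shiftIso,
      Functor.ShiftSequence.tautological, Functor.shift]
    unfold Functor.ShiftSequence.sequence Functor.ShiftSequence.shiftIso Functor.ShiftSequence.tautological
    dsimp
    simp only [id_comp, comp_id, assoc, ← Functor.map_comp]
    exact φ.naturality _
  -- the monomorphism part
  have hmono : ∀ (n : ℕ) (i : ℤ), i < d + n → ∀ X ∈ S, Mono (φ.app (X⟦i⟧)) := by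
    intro n
    induction n with
    | zero =>
      intro i hi X hX
      refine ⟨fun {Z} a b _ => ?_⟩
      exact (hd i (by simpa using hi) X hX).1.eq_of_tgt a b
    | succ n ih =>
      intro i hi X hX
      obtain ⟨X', Y, f, g, h, hT, hY, hisoX'⟩ := h2 X hX
      have hii : (i - 1) + 1 = i := by omega
      set T := Triangle.mk f g h with hTdef
      let R₁ := ComposableArrows.mk₃ ((F.shift (i-1)).map T.mor₂)
        (F.homologySequenceδ T (i-1) i hii) ((F.shift i).map T.mor₁)
      let R₂ := ComposableArrows.mk₃ ((F'.shift (i-1)).map T.mor₂)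
        (F'.homologySequenceδ T (i-1) i hii) ((F'.shift i).map T.mor₁)
      have hR₁ : R₁.Exact := ComposableArrows.exact_of_δ₀
        (F.homologySequence_exact₃ T hT (i-1) i hii).exact_toComposableArrows
        (F.homologySequence_exact₁ T hT (i-1) i hii).exact_toComposableArrows
      have hR₂ : R₂.Exact := ComposableArrows.exact_of_δ₀
        (F'.homologySequence_exact₃ T hT (i-1) i hii).exact_toComposableArrows
        (F'.homologySequence_exact₁ T hT (i-1) i hii).exact_toComposableArrows
      let ψ : R₁ ⟶ R₂ := ComposableArrows.homMk₃
        (φ.app (X'⟦(i-1 : ℤ)⟧)) (φ.app (Y⟦(i-1 : ℤ)⟧)) (φ.app (X⟦i⟧)) (φ.app (X'⟦i⟧))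
        (φ.naturality _) (hδ T (i-1) i hii) (φ.naturality _)
      have h₀ : Epi (ComposableArrows.app' ψ 0) := by
        exact @CategoryTheory.IsIso.epi_of_iso _ _ _ _ _ (hisoX' (i-1))
      have h₁ : Mono (ComposableArrows.app' ψ 1) := ih (i-1) (by omega) Y hY
      have h₃ : Mono (ComposableArrows.app' ψ 3) := by
        exact @CategoryTheory.IsIso.mono_of_iso _ _ _ _ _ (hisoX' i)
      exact Abelian.mono_of_epi_of_mono_of_mono ψ hR₁ hR₂ h₀ h₁ h₃
  have hmono' : ∀ (i : ℤ), ∀ X ∈ S, Mono (φ.app (X⟦i⟧)) := by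
    intro i X hX
    exact hmono (i - d + 1).toNat i (by omega) X hX
  -- the isomorphism part
  have hiso : ∀ (n : ℕ) (i : ℤ), i < d + n → ∀ X ∈ S, IsIso (φ.app (X⟦i⟧)) := by
    intro n
    induction n with
    | zero =>
      intro i hi X hX
      obtain ⟨hz, hz'⟩ := hd i (by simpa using hi) X hX
      exact ⟨0, hz.eq_of_src _ _, hz'.eq_of_src _ _⟩
    | succ n ih =>
      intro i hi X hX
      obtain ⟨X', Y, f, g, h, hT, hY, hisoX'⟩ := h2 X hX
      have hii : (i - 1) + 1 = i := by omega
      set T := Triangle.mk f g h with hTdef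
      let R₁ := ComposableArrows.mk₃ (F.homologySequenceδ T (i-1) i hii)
        ((F.shift i).map T.mor₁) ((F.shift i).map T.mor₂)
      let R₂ := ComposableArrows.mk₃ (F'.homologySequenceδ T (i-1) i hii)
        ((F'.shift i).map T.mor₁) ((F'.shift i).map T.mor₂)
      have hR₁ : R₁.Exact := ComposableArrows.exact_of_δ₀
        (F.homologySequence_exact₁ T hT (i-1) i hii).exact_toComposableArrows
        (F.homologySequence_exact₂ T hT i).exact_toComposableArrows
      have hR₂ : R₂.Exact := ComposableArrows.exact_of_δ₀
        (F'.homologySequence_exact₁ T hT (i-1) i hii).exact_toComposableArrows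
        (F'.homologySequence_exact₂ T hT i).exact_toComposableArrows
      let ψ : R₁ ⟶ R₂ := ComposableArrows.homMk₃
        (φ.app (Y⟦(i-1 : ℤ)⟧)) (φ.app (X⟦i⟧)) (φ.app (X'⟦i⟧)) (φ.app (Y⟦i⟧))
        (hδ T (i-1) i hii) (φ.naturality _) (φ.naturality _)
      have h₀ : Epi (ComposableArrows.app' ψ 0) := by
        exact @CategoryTheory.IsIso.epi_of_iso _ _ _ _ _ (ih (i-1) (by omega) Y hY)
      have h₂ : Epi (ComposableArrows.app' ψ 2) := by
        exact @CategoryTheory.IsIso.epi_of_iso _ _ _ _ _ (hisoX' i)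
      have h₃ : Mono (ComposableArrows.app' ψ 3) := hmono' i Y hY
      haveI hepi : Epi (φ.app (X⟦i⟧)) :=
        Abelian.epi_of_epi_of_epi_of_mono ψ hR₁ hR₂ h₀ h₂ h₃
      haveI hm : Mono (φ.app (X⟦i⟧)) := hmono' i X hX
      exact isIso_of_mono_of_epi _
  intro X hX i
  exact hiso (i - d + 1).toNat i (by omega) X hX
end

section
/- Let p: D → D' be a triangulated functor admitting a left adjoint i: D' → D such that the composition p ∘ i is isomorphic to the identity of D' (via the counit/unit of the adjunction). Then p induces an equivalence D / Ker(p) ≅ D', where Ker(p) is the thick (full triangulated, closed under direct summands) subcategory of objects X with p(X) ≅ 0, and D / Ker(p) is the Verdier quotient. -/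
open CategoryTheory Limits Pretriangulated

/-- a triangulated functor `p` admitting a left adjoint `i` which is
also a right inverse (the unit `𝟭 ⟶ i ⋙ p` is an isomorphism) exhibits the target
as the Verdier quotient of the source by the kernel of `p`, i.e. `p` is the
localization at the class of morphisms whose cone is killed by `p`. -/
theorem stmt9 {D : Type u} [Category.{v} D] [Preadditive D] [HasZeroObject D]
    [HasShift D ℤ] [∀ n : ℤ, (shiftFunctor D n).Additive] [Pretriangulated D]
    {D' : Type u'} [Category.{v'} D'] [Preadditive D'] [HasZeroObject D']
    [HasShift D' ℤ] [∀ n : ℤ, (shiftFunctor D' n).Additive] [Pretriangulated D']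
    (p : D ⥤ D') [p.CommShift ℤ] [p.IsTriangulated]
    (i : D' ⥤ D) (adj : i ⊣ p) [IsIso adj.unit]
    (W : MorphismProperty D)
    (hW : ∀ ⦃X Y : D⦄ (f : X ⟶ Y), W f ↔
      ∃ (Z : D) (g : Y ⟶ Z) (h : Z ⟶ X⟦(1 : ℤ)⟧),
        (Triangle.mk f g h ∈ distTriang D) ∧ IsZero (p.obj Z)) :
    p.IsLocalization W := by
  have hWeq : W = (MorphismProperty.isomorphisms D').inverseImage p := by
    ext X Y f
    rw [hW]
    constructor
    · rintro ⟨Z, g, h, hT, hZ⟩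
      exact (Triangle.isZero₃_iff_isIso₁ _ (p.map_distinguished _ hT)).1 hZ
    · intro hf
      obtain ⟨Z, g, h, hT⟩ := Pretriangulated.distinguished_cocone_triangle f
      exact ⟨Z, g, h, hT,
        Triangle.isZero₃_of_isIso₁ _ (p.map_distinguished _ hT) hf⟩
  rw [hWeq]
  set W' := (MorphismProperty.isomorphisms D').inverseImage p with hW'
  have hp : W'.IsInvertedBy p := fun _ _ _ hf => hf
  have hcounit : ∀ (X : D), IsIso (p.map (adj.counit.app X)) := fun X => by
    have h₁ := adj.right_triangle_components X
    haveI : IsIso (adj.unit.app (p.obj X) ≫ p.map (adj.counit.app X)) := by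
      rw [h₁]; exact IsIso.id _
    haveI : IsIso (adj.unit.app (p.obj X)) := inferInstance
    exact IsIso.of_isIso_comp_left (adj.unit.app (p.obj X)) (p.map (adj.counit.app X))
  have : ∀ (X : D), IsIso ((Functor.whiskerRight adj.counit W'.Q).app X) := fun X =>
    Localization.inverts W'.Q W' _ (hcounit X)
  have : IsIso (Functor.whiskerRight adj.counit W'.Q) := NatIso.isIso_of_isIso_app _
  let e : W'.Localization ≌ D' :=
    CategoryTheory.Equivalence.mk (Localization.lift p hp W'.Q) (i ⋙ W'.Q)
      (Localization.liftNatIso W'.Q W' W'.Q (p ⋙ i ⋙ W'.Q) _ _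
        (W'.Q.leftUnitor.symm ≪≫ (asIso (Functor.whiskerRight adj.counit W'.Q)).symm))
      (Functor.associator _ _ _ ≪≫
        Functor.isoWhiskerLeft i (Localization.fac p hp W'.Q) ≪≫ (asIso adj.unit).symm)
  exact Functor.IsLocalization.of_equivalence_target W'.Q W' p e
    (Localization.fac p hp W'.Q)
end

section
/- Let T, T': D → D be triangulated endofunctors of a triangulated category D, and η: T → T' a natural transformation. Suppose D has a bounded t-structure with heart A, both T and T' send D^{<0} into D^{<0}, and η is an isomorphism on a full subcategory D₀ ⊆ D such that every object of D is isomorphic to an object of D₀ up to truncation, i.e. for every X ∈ D and every n there exists X₀ ∈ D₀ and a morphism X₀ → X whose cone lies in D^{<-n}. Then η_X is an isomorphism for every X ∈ D. -/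
open CategoryTheory Limits Pretriangulated Triangulated

section Aux

variable {D : Type u} [Category.{v} D] [Preadditive D] [HasZeroObject D]
    [HasShift D ℤ] [∀ n : ℤ, (shiftFunctor D n).Additive] [Pretriangulated D]

/-- Orthogonality: maps from `LE n₀` to `GE n₁` vanish when `n₀ < n₁`. -/
lemma stmt12_aux_zero (t : TStructure D) {X Y : D} (f : X ⟶ Y) {n₀ n₁ : ℤ}
    (h : n₀ < n₁) (hX : t.le n₀ X) (hY : t.ge n₁ Y) : f = 0 := by
  have hX' : t.le 0 (X⟦n₀⟧) := t.le_shift n₀ n₀ 0 (by omega) X hX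
  have hY' : t.ge (n₁ - n₀) (Y⟦n₀⟧) := t.ge_shift n₁ n₀ (n₁ - n₀) (by omega) Y hY
  have hY'' : t.ge 1 (Y⟦n₀⟧) := t.ge_antitone (by omega) _ hY'
  have : (shiftFunctor D n₀).map f = 0 := t.zero' _ hX' hY''
  apply (shiftFunctor D n₀).map_injective
  rw [this, Functor.map_zero]

/-- If `F` commutes with shifts and preserves `LE (-1)`, it preserves all `LE m`. -/
lemma stmt12_aux_le (t : TStructure D) (F : D ⥤ D) [F.CommShift ℤ]
    (hF : ∀ X : D, t.le (-1) X → t.le (-1) (F.obj X)) {X : D} {m : ℤ}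
    (hX : t.le m X) : t.le m (F.obj X) := by
  have h1 : t.le (-1) (X⟦m + 1⟧) := t.le_shift m (m + 1) (-1) (by omega) X hX
  have h2 : t.le (-1) (F.obj (X⟦m + 1⟧)) := hF _ h1
  have h3 : t.le (-1) ((F.obj X)⟦m + 1⟧) :=
    (t.le (-1)).prop_of_iso ((F.commShiftIso (m + 1 : ℤ)).app X) h2
  have h4 : t.le m (((F.obj X)⟦m + 1⟧)⟦-(m + 1)⟧) :=
    t.le_shift (-1) (-(m + 1)) m (by omega) _ h3
  exact (t.le m).prop_of_iso (shiftShiftNeg (F.obj X) (m + 1)) h4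

/-- Precomposition with the first map of a distinguished triangle is bijective
when the third object (and its `⟦-1⟧`-shift) admits no nonzero maps to `Y`. -/
lemma stmt12_aux_bij {Tr : Triangle D} (hTr : Tr ∈ distTriang D) (Y : D)
    (h3 : ∀ f : Tr.obj₃ ⟶ Y, f = 0) (h3' : ∀ f : Tr.obj₃⟦(-1 : ℤ)⟧ ⟶ Y, f = 0) :
    Function.Bijective (fun x : Tr.obj₂ ⟶ Y => Tr.mor₁ ≫ x) := by
  constructor
  · intro φ₁ φ₂ h
    have h0 : Tr.mor₁ ≫ (φ₁ - φ₂) = 0 := by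
      simp only [Preadditive.comp_sub]
      rw [show Tr.mor₁ ≫ φ₁ = Tr.mor₁ ≫ φ₂ from h, sub_self]
    obtain ⟨g, hg⟩ := Triangle.yoneda_exact₂ _ hTr _ h0
    rw [h3 g, comp_zero] at hg
    exact sub_eq_zero.1 hg
  · intro ψ
    obtain ⟨g, hg⟩ := Triangle.yoneda_exact₂ _ (inv_rot_of_distTriang _ hTr) ψ (h3' _)
    exact ⟨g, hg.symm⟩

end Aux

/-- let `η : T ⟶ T'` be a natural transformation between
triangulated endofunctors of a category with a bounded t-structure `t`, both
preserving `D^{<0}`. If `η` is an isomorphism on a full subcategory `D₀` such that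
every object can be approximated by objects of `D₀` up to cones in arbitrarily
negative degrees, then `η` is an isomorphism everywhere. -/
theorem stmt12 {D : Type u} [Category.{v} D] [Preadditive D] [HasZeroObject D]
    [HasShift D ℤ] [∀ n : ℤ, (shiftFunctor D n).Additive] [Pretriangulated D]
    (t : TStructure D)
    (hbounded : ∀ X : D, ∃ a b : ℤ, t.ge a X ∧ t.le b X)
    (T T' : D ⥤ D) [T.CommShift ℤ] [T.IsTriangulated]
    [T'.CommShift ℤ] [T'.IsTriangulated]
    (η : T ⟶ T')
    (hT : ∀ X : D, t.le (-1) X → t.le (-1) (T.obj X))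
    (hT' : ∀ X : D, t.le (-1) X → t.le (-1) (T'.obj X))
    (D₀ : Set D)
    (hη : ∀ X ∈ D₀, IsIso (η.app X))
    (happrox : ∀ (X : D) (n : ℤ), ∃ X₀ ∈ D₀, ∃ (f : X₀ ⟶ X) (Z : D)
      (g : X ⟶ Z) (h : Z ⟶ X₀⟦(1 : ℤ)⟧),
      (Triangle.mk f g h ∈ distTriang D) ∧ t.le (-n - 1) Z) :
    ∀ X : D, IsIso (η.app X) := by
  intro X
  apply isIso_of_coyoneda_map_bijective
  intro Y
  obtain ⟨a, b, hYa, -⟩ := hbounded Y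
  obtain ⟨X₀, hX₀, f, Z, g, h, hdist, hZ⟩ := happrox X (1 - a)
  -- `hZ : t.LE (-(1 - a) - 1) Z`, i.e. `t.LE (a - 2) Z`
  have hTZ : t.le (-(1 - a) - 1) (T.obj Z) := stmt12_aux_le t T hT hZ
  have hT'Z : t.le (-(1 - a) - 1) (T'.obj Z) := stmt12_aux_le t T' hT' hZ
  have hTZshift : t.le (-(1 - a)) ((T.obj Z)⟦(-1 : ℤ)⟧) :=
    t.le_shift (-(1 - a) - 1) (-1) (-(1 - a)) (by omega) _ hTZ
  have hT'Zshift : t.le (-(1 - a)) ((T'.obj Z)⟦(-1 : ℤ)⟧) :=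
    t.le_shift (-(1 - a) - 1) (-1) (-(1 - a)) (by omega) _ hT'Z
  have bijT : Function.Bijective (fun x : T.obj X ⟶ Y => T.map f ≫ x) :=
    stmt12_aux_bij (T.map_distinguished _ hdist) Y
      (fun φ => stmt12_aux_zero t φ (by omega) hTZ hYa)
      (fun φ => stmt12_aux_zero t φ (by omega) hTZshift hYa)
  have bijT' : Function.Bijective (fun x : T'.obj X ⟶ Y => T'.map f ≫ x) :=
    stmt12_aux_bij (T'.map_distinguished _ hdist) Y
      (fun φ => stmt12_aux_zero t φ (by omega) hT'Z hYa)
      (fun φ => stmt12_aux_zero t φ (by omega) hT'Zshift hYa)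
  haveI := hη X₀ hX₀
  have bij₀ : Function.Bijective (fun x : T'.obj X₀ ⟶ Y => η.app X₀ ≫ x) :=
    ⟨fun _ _ hx => by simpa only [cancel_epi] using hx,
     fun y => ⟨inv (η.app X₀) ≫ y, by simp⟩⟩
  have hcomp : (fun x : T.obj X ⟶ Y => T.map f ≫ x) ∘
      (fun x : T'.obj X ⟶ Y => η.app X ≫ x) =
      (fun x : T'.obj X₀ ⟶ Y => η.app X₀ ≫ x) ∘
      (fun x : T'.obj X ⟶ Y => T'.map f ≫ x) := by
    funext x
    simp only [Function.comp_apply, ← Category.assoc, η.naturality]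
  have hbij : Function.Bijective ((fun x : T.obj X ⟶ Y => T.map f ≫ x) ∘
      (fun x : T'.obj X ⟶ Y => η.app X ≫ x)) := by
    rw [hcomp]; exact bij₀.comp bijT'
  exact (Function.Bijective.of_comp_iff' bijT _).1 hbij
end
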